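/- arXiv:0805.1034 — 4 statements merged into one kernel-verified Lean document; each statement's English description precedes it below -/
import Mathlib

section
/- Let a1, a2, b1, b3 > 0 and b2 < 0 be real numbers, and let α = (|b2|/(2·b3))·(√(1 + 4·a1·b1·b3/(a2·b2²)) - 1). Then the set of all equilibria (ρs, ρn) of the system ρs' = -a1·ρn·ρs - a2·ρs², ρn' = -b1·ρs - b2·ρn² - b3·ρn³ with ρs ≥ 0 is exactly { (0,0), (0, -b2/b3), (a1·α/a2, -α) }. -/
/-- the equilibria of the system ρs' = -a1·ρn·ρs - a2·ρs²,
ρn' = -b1·ρs - b2·ρn² - b3·ρn³ with ρs ≥ 0 are exactly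
(0,0), (0, -b2/b3) and (a1·α/a2, -α). -/
theorem equilibria_classification (a1 a2 b1 b2 b3 α : ℝ)
    (ha1 : 0 < a1) (ha2 : 0 < a2) (hb1 : 0 < b1) (hb3 : 0 < b3) (hb2 : b2 < 0)
    (hα : α = (|b2| / (2 * b3)) * (Real.sqrt (1 + 4 * a1 * b1 * b3 / (a2 * b2 ^ 2)) - 1)) :
    {p : ℝ × ℝ | 0 ≤ p.1 ∧
        -a1 * p.2 * p.1 - a2 * p.1 ^ 2 = 0 ∧
        -b1 * p.1 - b2 * p.2 ^ 2 - b3 * p.2 ^ 3 = 0} =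
      {((0 : ℝ), (0 : ℝ)), ((0 : ℝ), -b2 / b3), (a1 * α / a2, -α)} := by
  have hb2' : (0:ℝ) < -b2 := by linarith
  have hb2ne : b2 ≠ 0 := hb2.ne
  have hb3ne : b3 ≠ 0 := hb3.ne'
  have ha2ne : a2 ≠ 0 := ha2.ne'
  set s := Real.sqrt (b2 ^ 2 + 4 * a1 * b1 * b3 / a2) with hs_def
  have hDpos : (0:ℝ) < b2 ^ 2 + 4 * a1 * b1 * b3 / a2 := by positivity
  have hs_nonneg : 0 ≤ s := Real.sqrt_nonneg _
  have hs2 : s ^ 2 = b2 ^ 2 + 4 * a1 * b1 * b3 / a2 := Real.sq_sqrt hDpos.le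
  have hs2' : a2 * s ^ 2 = a2 * b2 ^ 2 + 4 * a1 * b1 * b3 := by
    rw [hs2]; field_simp
  have hs_gt : -b2 < s := by
    nlinarith [hs2, div_pos (by positivity : (0:ℝ) < 4 * a1 * b1 * b3) ha2]
  have hαs : α = (s + b2) / (2 * b3) := by
    have h1 : 1 + 4 * a1 * b1 * b3 / (a2 * b2 ^ 2)
        = (b2 ^ 2 + 4 * a1 * b1 * b3 / a2) / b2 ^ 2 := by
      field_simp
    have h2 : Real.sqrt (1 + 4 * a1 * b1 * b3 / (a2 * b2 ^ 2)) = s / (-b2) := by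
      rw [h1, Real.sqrt_div hDpos.le, hs_def]
      congr 1
      rw [Real.sqrt_sq_eq_abs, abs_of_neg hb2]
    rw [hα, h2, abs_of_neg hb2]
    field_simp
    ring
  have hα_pos : 0 < α := by
    rw [hαs]
    apply div_pos (by linarith) (by linarith)
  have hquad : a2 * b3 * α ^ 2 - a2 * b2 * α - a1 * b1 = 0 := by
    rw [hαs]
    field_simp
    linear_combination hs2'
  ext ⟨x, y⟩
  simp only [Set.mem_setOf_eq, Set.mem_insert_iff, Set.mem_singleton_iff, Prod.mk.injEq]
  constructor
  · rintro ⟨hx, he1, he2⟩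
    have hfac1 : x * (a1 * y + a2 * x) = 0 := by linear_combination -he1
    rcases mul_eq_zero.1 hfac1 with hx0 | hxy
    · -- x = 0
      subst hx0
      have hfac2 : y ^ 2 * (b2 + b3 * y) = 0 := by linear_combination -he2
      rcases mul_eq_zero.1 hfac2 with hy0 | hy
      · left; exact ⟨rfl, pow_eq_zero_iff (n := 2) (by norm_num) |>.1 hy0⟩
      · right; left
        refine ⟨rfl, ?_⟩
        field_simp
        linarith
    · -- a1 * y + a2 * x = 0, so x = -(a1/a2) y
      have hy_le : y ≤ 0 := by nlinarith
      have hfac3 : y * (a2 * b3 * y ^ 2 + a2 * b2 * y - a1 * b1) = 0 := by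
        linear_combination (-a2) * he2 + (-b1) * hxy
      rcases mul_eq_zero.1 hfac3 with hy0 | hq
      · left
        subst hy0
        refine ⟨?_, rfl⟩
        have : a2 * x = 0 := by linarith
        exact (mul_eq_zero.1 this).resolve_left ha2ne
      · -- y satisfies the quadratic; show y = -α
        have hsplit : (y + α) * (a2 * b3 * (y - α) + a2 * b2) = 0 := by
          linear_combination hq - hquad
        rcases mul_eq_zero.1 hsplit with h1 | h2
        · right; right
          have hy_eq : y = -α := by linarith
          refine ⟨?_, hy_eq⟩
          have hx_eq : a2 * x = a1 * α := by rw [hy_eq] at hxy; linarith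
          field_simp
          linarith
        · exfalso
          have h3 : a2 * b3 * (y - α) = -(a2 * b2) := by linarith
          nlinarith [mul_pos (mul_pos ha2 hb3) (show 0 < α - y by linarith),
            mul_pos ha2 hb2']
  · rintro (⟨hx, hy⟩ | ⟨hx, hy⟩ | ⟨hx, hy⟩) <;> subst hx <;> subst hy
    · exact ⟨le_refl 0, by ring, by ring⟩
    · refine ⟨le_refl 0, by ring, ?_⟩
      field_simp
      ring
    · refine ⟨by positivity, ?_, ?_⟩
      · field_simp
        ring
      · have h : -b1 * (a1 * α / a2) - b2 * (-α) ^ 2 - b3 * (-α) ^ 3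
            = (α / a2) * (a2 * b3 * α ^ 2 - a2 * b2 * α - a1 * b1) := by
          field_simp
          ring
        rw [h, hquad, mul_zero]
end

section
/- Let a1, a2, b1, b3 > 0 and b2 < 0 be real numbers, let α = (|b2|/(2·b3))·(√(1 + 4·a1·b1·b3/(a2·b2²)) - 1), and let F(ρs, ρn) = (-a1·ρn·ρs - a2·ρs², -b1·ρs - b2·ρn² - b3·ρn³). Then the Jacobian matrix of F at the equilibrium Z2 = (a1·α/a2, -α) has strictly negative trace and strictly positive determinant; consequently both of its eigenvalues have negative real part. -/
/-- The Jacobian matrix of a planar map `F : ℝ × ℝ → ℝ × ℝ` at a point `p`,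
given as the 2×2 matrix of first partial derivatives. -/
noncomputable def jacobian2 (F : ℝ × ℝ → ℝ × ℝ) (p : ℝ × ℝ) : Matrix (Fin 2) (Fin 2) ℝ :=
  !![deriv (fun s => (F (s, p.2)).1) p.1, deriv (fun s => (F (p.1, s)).1) p.2;
     deriv (fun s => (F (s, p.2)).2) p.1, deriv (fun s => (F (p.1, s)).2) p.2]

lemma neg_re_of_trace_det (M : Matrix (Fin 2) (Fin 2) ℝ) (ht : M.trace < 0) (hd : 0 < M.det) :
    ∀ μ ∈ spectrum ℂ (M.map (fun x : ℝ => (x : ℂ))), μ.re < 0 := by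
  intro μ hμ
  rw [spectrum.mem_iff] at hμ
  have hdet : ((algebraMap ℂ (Matrix (Fin 2) (Fin 2) ℂ) μ) - M.map (fun x : ℝ => (x : ℂ))).det = 0 := by
    by_contra h
    exact hμ ((Matrix.isUnit_iff_isUnit_det _).2 (Ne.isUnit h))
  rw [Matrix.trace_fin_two] at ht
  rw [Matrix.det_fin_two] at hd
  simp only [Matrix.det_fin_two, Matrix.sub_apply, Matrix.map_apply,
    Matrix.algebraMap_matrix_apply] at hdet
  norm_num at hdet
  set a := M 0 0; set b := M 1 1; set c := M 0 1; set e := M 1 0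
  have hre := congrArg Complex.re hdet
  have him := congrArg Complex.im hdet
  simp [Complex.sub_re, Complex.sub_im, Complex.mul_re, Complex.mul_im] at hre him
  rcases eq_or_ne μ.im 0 with hy | hy
  · rcases lt_or_ge μ.re 0 with h | h
    · exact h
    · exfalso
      rw [hy] at hre
      nlinarith [hre, sq_nonneg μ.re, mul_nonneg h h]
  · have h3 : μ.im * (μ.re + μ.re - (a + b)) = 0 := by linear_combination him
    have h4 := (mul_eq_zero.1 h3).resolve_left hy
    linarith


/-- the Jacobian of F at Z2 = (a1·α/a2, -α) has negative trace and
positive determinant; consequently both of its (complex) eigenvalues have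
negative real part. -/
theorem jacobian_at_Z2 (a1 a2 b1 b2 b3 α : ℝ)
    (ha1 : 0 < a1) (ha2 : 0 < a2) (hb1 : 0 < b1) (hb3 : 0 < b3) (hb2 : b2 < 0)
    (hα : α = (|b2| / (2 * b3)) * (Real.sqrt (1 + 4 * a1 * b1 * b3 / (a2 * b2 ^ 2)) - 1))
    (F : ℝ × ℝ → ℝ × ℝ)
    (hF : F = fun p => (-a1 * p.2 * p.1 - a2 * p.1 ^ 2,
                        -b1 * p.1 - b2 * p.2 ^ 2 - b3 * p.2 ^ 3)) :
    (jacobian2 F (a1 * α / a2, -α)).trace < 0 ∧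
    0 < (jacobian2 F (a1 * α / a2, -α)).det ∧
    ∀ μ ∈ spectrum ℂ ((jacobian2 F (a1 * α / a2, -α)).map (fun x : ℝ => (x : ℂ))),
      μ.re < 0 := by
  have hb2' : (0:ℝ) < |b2| := abs_pos.2 (ne_of_lt hb2)
  set c := 4 * a1 * b1 * b3 / (a2 * b2 ^ 2) with hc
  have hb2sq : 0 < b2 ^ 2 := by nlinarith
  have hcpos : 0 < c := by rw [hc]; positivity
  set s := Real.sqrt (1 + c) with hs
  have hs1 : 1 < s := by
    rw [hs]
    exact (Real.lt_sqrt (by norm_num)).2 (by nlinarith)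
  have hαpos : 0 < α := by
    rw [hα]
    exact mul_pos (by positivity) (by linarith)
  have hs2 : s ^ 2 = 1 + c := Real.sq_sqrt (by linarith)
  have h1 : 2 * b3 * α = -b2 * (s - 1) := by
    rw [hα, abs_of_neg hb2]
    field_simp
  have hc' : c * (a2 * b2 ^ 2) = 4 * a1 * b1 * b3 :=
    div_mul_cancel₀ _ (ne_of_gt (mul_pos ha2 hb2sq))
  have hsq : (2 * b3 * α) ^ 2 = b2 ^ 2 * (s - 1) ^ 2 := by rw [h1]; ring
  have h2 : b2 ^ 2 * s = b2 ^ 2 - 2 * b2 * b3 * α := by nlinarith [h1]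
  have h5 : 4 * b3 ^ 2 * α ^ 2 = b2 ^ 2 * c + 4 * b2 * b3 * α := by
    linear_combination hsq + b2 ^ 2 * hs2 - 2 * h2
  have hq' : (4 * b3) * (a2 * (b3 * α ^ 2 - b2 * α)) = (4 * b3) * (a1 * b1) := by
    linear_combination a2 * h5 + hc'
  have hq : a2 * (b3 * α ^ 2 - b2 * α) = a1 * b1 :=
    mul_left_cancel₀ (ne_of_gt (by positivity)) hq'
  -- compute the Jacobian
  have e00 : deriv (fun x : ℝ => -a1 * -α * x - a2 * x ^ 2) (a1 * α / a2) = -a1 * α := by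
    have h : HasDerivAt (fun x : ℝ => -a1 * -α * x - a2 * x ^ 2)
        (-a1 * -α * 1 - a2 * (2 * (a1 * α / a2) ^ 1)) (a1 * α / a2) :=
      ((hasDerivAt_id _).const_mul _).sub ((hasDerivAt_pow 2 _).const_mul a2)
    rw [h.deriv]
    field_simp
    ring
  have e01 : deriv (fun x : ℝ => -a1 * x * (a1 * α / a2) - a2 * (a1 * α / a2) ^ 2) (-α)
      = -(a1 ^ 2) * α / a2 := by
    have h : HasDerivAt (fun x : ℝ => -a1 * x * (a1 * α / a2) - a2 * (a1 * α / a2) ^ 2)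
        (-a1 * 1 * (a1 * α / a2)) (-α) :=
      (((hasDerivAt_id _).const_mul (-a1)).mul_const _).sub_const _
    rw [h.deriv]
    field_simp
  have e10 : deriv (fun x : ℝ => -b1 * x - b2 * (-α) ^ 2 - b3 * (-α) ^ 3) (a1 * α / a2)
      = -b1 := by
    have h : HasDerivAt (fun x : ℝ => -b1 * x - b2 * (-α) ^ 2 - b3 * (-α) ^ 3)
        (-b1 * 1) (a1 * α / a2) :=
      (((hasDerivAt_id _).const_mul (-b1)).sub_const _).sub_const _
    rw [h.deriv]; ring
  have e11 : deriv (fun x : ℝ => -b1 * (a1 * α / a2) - b2 * x ^ 2 - b3 * x ^ 3) (-α)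
      = 2 * b2 * α - 3 * b3 * α ^ 2 := by
    have h : HasDerivAt (fun x : ℝ => -b1 * (a1 * α / a2) - b2 * x ^ 2 - b3 * x ^ 3)
        (0 - b2 * (2 * (-α) ^ 1) - b3 * (3 * (-α) ^ 2)) (-α) :=
      ((hasDerivAt_const _ _).sub ((hasDerivAt_pow 2 _).const_mul b2)).sub
        ((hasDerivAt_pow 3 _).const_mul b3)
    rw [h.deriv]; ring
  have hJ : jacobian2 F (a1 * α / a2, -α) =
      !![-a1 * α, -(a1 ^ 2) * α / a2; -b1, 2 * b2 * α - 3 * b3 * α ^ 2] := by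
    rw [jacobian2, hF]
    simp only []
    rw [e00, e01, e10, e11]
  rw [hJ]
  have htneg : (!![-a1 * α, -(a1 ^ 2) * α / a2; -b1, 2 * b2 * α - 3 * b3 * α ^ 2]
      : Matrix (Fin 2) (Fin 2) ℝ).trace < 0 := by
    rw [Matrix.trace_fin_two]
    norm_num
    have t1 : 0 < a1 * α := mul_pos ha1 hαpos
    have t2 : b2 * α < 0 := mul_neg_of_neg_of_pos hb2 hαpos
    have t3 : 0 < b3 * α ^ 2 := by positivity
    linarith
  have hdpos : 0 < (!![-a1 * α, -(a1 ^ 2) * α / a2; -b1, 2 * b2 * α - 3 * b3 * α ^ 2]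
      : Matrix (Fin 2) (Fin 2) ℝ).det := by
    rw [Matrix.det_fin_two]
    norm_num
    have hD : a2 * ((-a1 * α) * (2 * b2 * α - 3 * b3 * α ^ 2) - (-(a1 ^ 2) * α / a2) * (-b1))
        = a2 * (a1 * α * (2 * b3 * α ^ 2 - b2 * α)) := by
      linear_combination (a1 * α) * hq - a1 ^ 2 * α * b1 * (mul_inv_cancel₀ (ne_of_gt ha2))
    have hD' : (-a1 * α) * (2 * b2 * α - 3 * b3 * α ^ 2) - (-(a1 ^ 2) * α / a2) * (-b1)
        = a1 * α * (2 * b3 * α ^ 2 - b2 * α) := mul_left_cancel₀ (ne_of_gt ha2) hD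
    have t1 : 0 < 2 * b3 * α ^ 2 := by positivity
    have t2 : b2 * α < 0 := mul_neg_of_neg_of_pos hb2 hαpos
    have hfac : 0 < 2 * b3 * α ^ 2 - b2 * α := by linarith
    have hpos := mul_pos (mul_pos ha1 hαpos) hfac
    have goal' : -(a1 ^ 2 * α) / a2 * b1 - a1 * α * (2 * b2 * α - 3 * b3 * α ^ 2)
        = a1 * α * (2 * b3 * α ^ 2 - b2 * α) := by linear_combination hD'
    linarith [goal', hpos]
  exact ⟨htneg, hdpos, neg_re_of_trace_det _ htneg hdpos⟩
end

section
/- Let a1, a2, b1, b3 > 0, b2 < 0, λ1 ∈ ℝ and λ2 > 0 be real numbers, and set ρ⁺ = (-b2 + √(b2² + 4·b3·λ2))/(2·b3). Then ρ⁺ > 0, the point (0, ρ⁺) is an equilibrium of the system ρs' = λ1·ρs - a1·ρn·ρs - a2·ρs², ρn' = λ2·ρn - b1·ρs - b2·ρn² - b3·ρn³, and the Jacobian matrix of the right-hand side at (0, ρ⁺) is lower triangular with diagonal entries λ1 - a1·ρ⁺ and b2·ρ⁺ - 2·λ2; the entry b2·ρ⁺ - 2·λ2 is strictly negative, and if in addition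 λ1 < a1·ρ⁺ then both diagonal entries, and hence both eigenvalues of the Jacobian, are strictly negative. -/
lemma spec_tri (x y z μ : ℝ) (h : μ ∈ spectrum ℝ (!![x, 0; y, z] : Matrix (Fin 2) (Fin 2) ℝ)) :
    μ = x ∨ μ = z := by
  rw [spectrum.mem_iff, Matrix.isUnit_iff_isUnit_det] at h
  have hdet : ((algebraMap ℝ (Matrix (Fin 2) (Fin 2) ℝ)) μ - !![x, 0; y, z]).det
      = (μ - x) * (μ - z) := by
    simp [Matrix.algebraMap_eq_diagonal, Matrix.det_fin_two, Matrix.diagonal,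
      Matrix.vecHead, Matrix.vecTail]
  rw [hdet, isUnit_iff_ne_zero] at h
  rcases mul_eq_zero.mp (not_not.mp h) with h | h
  · left; linarith
  · right; linarith

/-- for λ2 > 0, ρ⁺ = (-b2 + √(b2² + 4b3λ2))/(2b3) is positive, (0, ρ⁺) is an
equilibrium of the system (8.207), the Jacobian there is lower triangular with diagonal
entries λ1 - a1·ρ⁺ and b2·ρ⁺ - 2·λ2; the latter is negative, and if λ1 < a1·ρ⁺ then both
diagonal entries, hence all eigenvalues of the Jacobian, are negative. -/
theorem solid_state_equilibrium (a1 a2 b1 b2 b3 l1 l2 ρplus : ℝ)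
    (ha1 : 0 < a1) (ha2 : 0 < a2) (hb1 : 0 < b1) (hb3 : 0 < b3) (hb2 : b2 < 0)
    (hl2 : 0 < l2)
    (hρ : ρplus = (-b2 + Real.sqrt (b2 ^ 2 + 4 * b3 * l2)) / (2 * b3))
    (F : ℝ × ℝ → ℝ × ℝ)
    (hF : F = fun p => (l1 * p.1 - a1 * p.2 * p.1 - a2 * p.1 ^ 2,
                        l2 * p.2 - b1 * p.1 - b2 * p.2 ^ 2 - b3 * p.2 ^ 3)) :
    0 < ρplus ∧
    F (0, ρplus) = (0, 0) ∧
    jacobian2 F (0, ρplus) = !![l1 - a1 * ρplus, 0; -b1, b2 * ρplus - 2 * l2] ∧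
    b2 * ρplus - 2 * l2 < 0 ∧
    (l1 < a1 * ρplus →
      l1 - a1 * ρplus < 0 ∧ b2 * ρplus - 2 * l2 < 0 ∧
      ∀ μ ∈ spectrum ℝ (jacobian2 F (0, ρplus)), μ < 0) := by
  have hsq : (0:ℝ) ≤ b2 ^ 2 + 4 * b3 * l2 := by positivity
  have hs : Real.sqrt (b2 ^ 2 + 4 * b3 * l2) ^ 2 = b2 ^ 2 + 4 * b3 * l2 :=
    Real.sq_sqrt hsq
  have hspos : 0 ≤ Real.sqrt (b2 ^ 2 + 4 * b3 * l2) := Real.sqrt_nonneg _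
  have hρpos : 0 < ρplus := by
    rw [hρ]; apply div_pos (by linarith) (by linarith)
  have h2 : 2 * b3 * ρplus = -b2 + Real.sqrt (b2 ^ 2 + 4 * b3 * l2) := by
    rw [hρ]; field_simp
  have hroot : b3 * ρplus ^ 2 + b2 * ρplus - l2 = 0 := by nlinarith [sq_nonneg ρplus]
  -- equilibrium
  have heq : F (0, ρplus) = (0, 0) := by
    rw [hF]; simp; nlinarith
  -- jacobian entries
  have e00 : deriv (fun s => (F (s, ρplus)).1) 0 = l1 - a1 * ρplus := by
    rw [hF]
    have : HasDerivAt (fun s : ℝ => l1 * s - a1 * ρplus * s - a2 * s ^ 2)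
        (l1 - a1 * ρplus - a2 * (2 * 0 ^ 1)) 0 := by
      simpa using (((hasDerivAt_id 0).const_mul l1).fun_sub
        ((hasDerivAt_id 0).const_mul (a1 * ρplus))).fun_sub
        (((hasDerivAt_pow 2 0)).const_mul a2)
    simpa using this.deriv
  have e01 : deriv (fun s => (F ((0:ℝ), s)).1) ρplus = 0 := by
    rw [hF]
    simp
  have e10 : deriv (fun s => (F (s, ρplus)).2) 0 = -b1 := by
    rw [hF]
    have : HasDerivAt (fun s : ℝ =>
        l2 * ρplus - b1 * s - b2 * ρplus ^ 2 - b3 * ρplus ^ 3) (0 - b1 - 0 - 0) 0 := by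
      simpa using (((hasDerivAt_const 0 (l2 * ρplus)).fun_sub
        ((hasDerivAt_id 0).const_mul b1)).fun_sub (hasDerivAt_const 0 (b2 * ρplus ^ 2))).fun_sub
        (hasDerivAt_const 0 (b3 * ρplus ^ 3))
    simpa using this.deriv
  have e11 : deriv (fun s => (F ((0:ℝ), s)).2) ρplus = b2 * ρplus - 2 * l2 := by
    rw [hF]
    have h : HasDerivAt (fun s : ℝ => l2 * s - b1 * 0 - b2 * s ^ 2 - b3 * s ^ 3)
        (l2 - b2 * (2 * ρplus ^ 1) - b3 * (3 * ρplus ^ 2)) ρplus := by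
      simpa using ((((hasDerivAt_id ρplus).const_mul l2).fun_sub (hasDerivAt_const ρplus (b1 * 0))).fun_sub
        ((hasDerivAt_pow 2 ρplus).const_mul b2)).fun_sub ((hasDerivAt_pow 3 ρplus).const_mul b3)
    have := h.deriv
    simp only [pow_one] at this
    rw [this]; nlinarith
  have hjac : jacobian2 F (0, ρplus) = !![l1 - a1 * ρplus, 0; -b1, b2 * ρplus - 2 * l2] := by
    unfold jacobian2
    simp only [Prod.fst, Prod.snd]
    rw [e00, e01, e10, e11]
  have hdiag2 : b2 * ρplus - 2 * l2 < 0 := by nlinarith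
  refine ⟨hρpos, heq, hjac, hdiag2, fun hl1 => ⟨by linarith, hdiag2, fun μ hμ => ?_⟩⟩
  rw [hjac] at hμ
  rcases spec_tri _ _ _ _ hμ with h | h <;> subst h <;> linarith
end

section
/- Let a1, a2, b1, b3 > 0 and b2 < 0 be real numbers, let α = (|b2|/(2·b3))·(√(1 + 4·a1·b1·b3/(a2·b2²)) - 1), and let Z1 = (0, -b2/b3), Z2 = (a1·α/a2, -α). Consider the parametrized map G((λ1, λ2), (ρs, ρn)) = (λ1·ρs - a1·ρn·ρs - a2·ρs², λ2·ρn - b1·ρs - b2·ρn² - b3·ρn³). Then for each i ∈ {1, 2} there exist ε > 0 and a continuous map ζᵢ : {(λ1, λ2) ∈ ℝ² : |λ1| < ε, |λ2| < ε} → ℝ² such that ζᵢ(0, 0) = Zᵢ, G((λ1, λ2), ζᵢ(λ1, λ2)) = 0 for all such (λ1, λ2), and the Jacobian of G((λ1, λ2), ·) at ζᵢ(λ1, λ2) has negative trace and positive determinant (so both eigenvalues have negative real part). -/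
lemma jac_eq (a1 a2 b1 b2 b3 : ℝ) (q p : ℝ × ℝ) :
    jacobian2 (fun p => (q.1 * p.1 - a1 * p.2 * p.1 - a2 * p.1 ^ 2,
                         q.2 * p.2 - b1 * p.1 - b2 * p.2 ^ 2 - b3 * p.2 ^ 3)) p =
    !![q.1 - a1 * p.2 - 2 * a2 * p.1, -(a1 * p.1);
       -b1, q.2 - 2 * b2 * p.2 - 3 * b3 * p.2 ^ 2] := by
  have h00 : HasDerivAt (fun s : ℝ => q.1 * s - a1 * p.2 * s - a2 * s ^ 2)
      (q.1 - a1 * p.2 - 2 * a2 * p.1) p.1 := by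
    have := (((hasDerivAt_id p.1).const_mul q.1).sub ((hasDerivAt_id p.1).const_mul (a1 * p.2))).sub
      (((hasDerivAt_pow 2 p.1)).const_mul a2)
    exact this.congr_deriv (by ring)
  have h01 : HasDerivAt (fun s : ℝ => q.1 * p.1 - a1 * s * p.1 - a2 * p.1 ^ 2)
      (-(a1 * p.1)) p.2 := by
    have := ((hasDerivAt_const p.2 (q.1 * p.1)).sub
      (((hasDerivAt_id p.2).const_mul a1).mul_const p.1)).sub (hasDerivAt_const p.2 (a2 * p.1 ^ 2))
    exact this.congr_deriv (by ring)
  have h10 : HasDerivAt (fun s : ℝ => q.2 * p.2 - b1 * s - b2 * p.2 ^ 2 - b3 * p.2 ^ 3)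
      (-b1) p.1 := by
    have := (((hasDerivAt_const p.1 (q.2 * p.2)).sub ((hasDerivAt_id p.1).const_mul b1)).sub
      (hasDerivAt_const p.1 (b2 * p.2 ^ 2))).sub (hasDerivAt_const p.1 (b3 * p.2 ^ 3))
    exact this.congr_deriv (by ring)
  have h11 : HasDerivAt (fun s : ℝ => q.2 * s - b1 * p.1 - b2 * s ^ 2 - b3 * s ^ 3)
      (q.2 - 2 * b2 * p.2 - 3 * b3 * p.2 ^ 2) p.2 := by
    have := ((((hasDerivAt_id p.2).const_mul q.2).sub (hasDerivAt_const p.2 (b1 * p.1))).sub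
      ((hasDerivAt_pow 2 p.2).const_mul b2)).sub ((hasDerivAt_pow 3 p.2).const_mul b3)
    exact this.congr_deriv (by ring)
  unfold jacobian2
  simp only
  rw [h00.deriv, h01.deriv, h10.deriv, h11.deriv]

lemma branch_lemma (a1 a2 b1 b2 b3 : ℝ)
    (Z : ℝ × ℝ) (U : Set (ℝ × ℝ)) (hU : IsOpen U) (h0 : ((0:ℝ), (0:ℝ)) ∈ U)
    (ζ : ℝ × ℝ → ℝ × ℝ) (hζc : ContinuousOn ζ U) (hζ0 : ζ (0, 0) = Z)
    (hroot : ∀ q ∈ U, ((fun q (p : ℝ × ℝ) => (q.1 * p.1 - a1 * p.2 * p.1 - a2 * p.1 ^ 2,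
        q.2 * p.2 - b1 * p.1 - b2 * p.2 ^ 2 - b3 * p.2 ^ 3)) q (ζ q) : ℝ × ℝ) = (0, 0))
    (htr : (jacobian2 ((fun q (p : ℝ × ℝ) => (q.1 * p.1 - a1 * p.2 * p.1 - a2 * p.1 ^ 2,
        q.2 * p.2 - b1 * p.1 - b2 * p.2 ^ 2 - b3 * p.2 ^ 3)) ((0:ℝ),(0:ℝ))) Z).trace < 0)
    (hdet : 0 < (jacobian2 ((fun q (p : ℝ × ℝ) => (q.1 * p.1 - a1 * p.2 * p.1 - a2 * p.1 ^ 2,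
        q.2 * p.2 - b1 * p.1 - b2 * p.2 ^ 2 - b3 * p.2 ^ 3)) ((0:ℝ),(0:ℝ))) Z).det) :
    ∃ ε > (0 : ℝ), ∃ ζ' : ℝ × ℝ → ℝ × ℝ,
        ContinuousOn ζ' {q : ℝ × ℝ | |q.1| < ε ∧ |q.2| < ε} ∧
        ζ' (0, 0) = Z ∧
        ∀ q : ℝ × ℝ, |q.1| < ε → |q.2| < ε →
          ((fun q (p : ℝ × ℝ) => (q.1 * p.1 - a1 * p.2 * p.1 - a2 * p.1 ^ 2,
            q.2 * p.2 - b1 * p.1 - b2 * p.2 ^ 2 - b3 * p.2 ^ 3)) q (ζ' q) : ℝ × ℝ) = (0, 0) ∧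
          (jacobian2 ((fun q (p : ℝ × ℝ) => (q.1 * p.1 - a1 * p.2 * p.1 - a2 * p.1 ^ 2,
            q.2 * p.2 - b1 * p.1 - b2 * p.2 ^ 2 - b3 * p.2 ^ 3)) q) (ζ' q)).trace < 0 ∧
          0 < (jacobian2 ((fun q (p : ℝ × ℝ) => (q.1 * p.1 - a1 * p.2 * p.1 - a2 * p.1 ^ 2,
            q.2 * p.2 - b1 * p.1 - b2 * p.2 ^ 2 - b3 * p.2 ^ 3)) q) (ζ' q)).det := by
  set f : ℝ × ℝ → ℝ × ℝ := fun q =>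
    ((q.1 - a1 * (ζ q).2 - 2 * a2 * (ζ q).1) + (q.2 - 2 * b2 * (ζ q).2 - 3 * b3 * (ζ q).2 ^ 2),
     (q.1 - a1 * (ζ q).2 - 2 * a2 * (ζ q).1) * (q.2 - 2 * b2 * (ζ q).2 - 3 * b3 * (ζ q).2 ^ 2)
       - (-(a1 * (ζ q).1)) * (-b1)) with hf
  have htrace : ∀ q, (jacobian2 ((fun q (p : ℝ × ℝ) => (q.1 * p.1 - a1 * p.2 * p.1 - a2 * p.1 ^ 2,
        q.2 * p.2 - b1 * p.1 - b2 * p.2 ^ 2 - b3 * p.2 ^ 3)) q) (ζ q)).trace = (f q).1 := by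
    intro q; rw [jac_eq, Matrix.trace_fin_two_of]
  have hdet' : ∀ q, (jacobian2 ((fun q (p : ℝ × ℝ) => (q.1 * p.1 - a1 * p.2 * p.1 - a2 * p.1 ^ 2,
        q.2 * p.2 - b1 * p.1 - b2 * p.2 ^ 2 - b3 * p.2 ^ 3)) q) (ζ q)).det = (f q).2 := by
    intro q; rw [jac_eq, Matrix.det_fin_two_of]
  have hfc : ContinuousOn f U := by
    apply ContinuousOn.prodMk <;> fun_prop
  have hS : IsOpen (U ∩ f ⁻¹' (Set.Iio 0 ×ˢ Set.Ioi 0)) :=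
    hfc.isOpen_inter_preimage hU ((isOpen_Iio).prod (isOpen_Ioi))
  have h0S : ((0:ℝ), (0:ℝ)) ∈ U ∩ f ⁻¹' (Set.Iio 0 ×ˢ Set.Ioi 0) := by
    refine ⟨h0, ?_, ?_⟩
    · have := htrace (0,0); rw [hζ0] at this; rw [Set.mem_Iio, ← this]; exact htr
    · have := hdet' (0,0); rw [hζ0] at this; rw [Set.mem_Ioi, ← this]; exact hdet
  obtain ⟨ε, hε, hball⟩ := Metric.isOpen_iff.1 hS _ h0S
  have hsub : {q : ℝ × ℝ | |q.1| < ε ∧ |q.2| < ε} ⊆ U ∩ f ⁻¹' (Set.Iio 0 ×ˢ Set.Ioi 0) := by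
    intro q hq
    apply hball
    rw [Metric.mem_ball, Prod.dist_eq, Real.dist_eq, Real.dist_eq]
    simp only [sub_zero]
    exact max_lt hq.1 hq.2
  refine ⟨ε, hε, ζ, hζc.mono (fun q hq => (hsub hq).1), hζ0, fun q h1 h2 => ?_⟩
  have hq := hsub ⟨h1, h2⟩
  refine ⟨hroot q hq.1, ?_, ?_⟩
  · rw [htrace q]; exact hq.2.1
  · rw [hdet' q]; exact hq.2.2

set_option maxHeartbeats 2000000

/-- for each of the equilibria Z1 = (0, -b2/b3), Z2 = (a1·α/a2, -α) of the
unperturbed system (λ1 = λ2 = 0), there is a continuous branch ζ(λ1, λ2) of equilibria of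
the perturbed system (8.207), defined for |λ1|, |λ2| < ε, passing through Zᵢ at (0,0),
at which the Jacobian has negative trace and positive determinant (so both eigenvalues
have negative real part). -/
theorem perturbed_stable_equilibria (a1 a2 b1 b2 b3 α : ℝ)
    (ha1 : 0 < a1) (ha2 : 0 < a2) (hb1 : 0 < b1) (hb3 : 0 < b3) (hb2 : b2 < 0)
    (hα : α = (|b2| / (2 * b3)) * (Real.sqrt (1 + 4 * a1 * b1 * b3 / (a2 * b2 ^ 2)) - 1))
    (G : ℝ × ℝ → ℝ × ℝ → ℝ × ℝ)
    (hG : G = fun q p => (q.1 * p.1 - a1 * p.2 * p.1 - a2 * p.1 ^ 2,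
                          q.2 * p.2 - b1 * p.1 - b2 * p.2 ^ 2 - b3 * p.2 ^ 3)) :
    ∀ Z ∈ ({((0 : ℝ), -b2 / b3), (a1 * α / a2, -α)} : Set (ℝ × ℝ)),
      ∃ ε > (0 : ℝ), ∃ ζ : ℝ × ℝ → ℝ × ℝ,
        ContinuousOn ζ {q : ℝ × ℝ | |q.1| < ε ∧ |q.2| < ε} ∧
        ζ (0, 0) = Z ∧
        ∀ q : ℝ × ℝ, |q.1| < ε → |q.2| < ε →
          G q (ζ q) = (0, 0) ∧
          (jacobian2 (G q) (ζ q)).trace < 0 ∧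
          0 < (jacobian2 (G q) (ζ q)).det := by
  subst hG
  -- basic facts about α
  have hb2x : b2 ≠ 0 := ne_of_lt hb2
  have hαfacts : 0 < α ∧ b3 * α ^ 2 - b2 * α = a1 * b1 / a2 := by
    set s := Real.sqrt (1 + 4 * a1 * b1 * b3 / (a2 * b2 ^ 2)) with hsdef
    have harg : (0:ℝ) < 4 * a1 * b1 * b3 / (a2 * b2 ^ 2) := by positivity
    have hs2 : s ^ 2 = 1 + 4 * a1 * b1 * b3 / (a2 * b2 ^ 2) := Real.sq_sqrt (by linarith)
    have hs2' : a2 * b2 ^ 2 * s ^ 2 = a2 * b2 ^ 2 + 4 * a1 * b1 * b3 := by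
      field_simp at hs2; linarith
    have hs1 : 1 < s := by
      rw [hsdef, Real.lt_sqrt (by norm_num)]; linarith
    have habs : |b2| = -b2 := abs_of_neg hb2
    rw [habs] at hα
    constructor
    · rw [hα]; exact mul_pos (div_pos (by linarith) (by linarith)) (by linarith)
    · rw [hα]
      have hb2' : b2 ≠ 0 := ne_of_lt hb2
      field_simp
      linear_combination hs2'
  obtain ⟨hαpos, hid⟩ := hαfacts
  have hida : a2 * b3 * α ^ 2 - a2 * b2 * α = a1 * b1 := by
    have := hid
    field_simp at this
    linarith
  intro Z hZ
  simp only [Set.mem_insert_iff, Set.mem_singleton_iff] at hZ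
  rcases hZ with rfl | rfl
  · -- Z1 = (0, -b2/b3)
    set U : Set (ℝ × ℝ) := {q | |q.2| < b2 ^ 2 / (8 * b3)} with hU
    have hUopen : IsOpen U := isOpen_lt (continuous_abs.comp continuous_snd) continuous_const
    have h0U : ((0:ℝ), (0:ℝ)) ∈ U := by
      simp only [hU, Set.mem_setOf_eq, abs_zero]
      positivity
    set ζ : ℝ × ℝ → ℝ × ℝ := fun q => (0, (-b2 + Real.sqrt (b2 ^ 2 + 4 * b3 * q.2)) / (2 * b3))
      with hζ
    have hζc : ContinuousOn ζ U := by
      apply Continuous.continuousOn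
      fun_prop
    have hζ0 : ζ (0, 0) = ((0:ℝ), -b2 / b3) := by
      simp only [hζ, mul_zero, add_zero, Real.sqrt_sq_eq_abs, abs_of_neg hb2]
      norm_num
      rw [div_eq_div_iff (by linarith) (by linarith)]
      ring
    have hroot : ∀ q ∈ U, ((fun q (p : ℝ × ℝ) => (q.1 * p.1 - a1 * p.2 * p.1 - a2 * p.1 ^ 2,
        q.2 * p.2 - b1 * p.1 - b2 * p.2 ^ 2 - b3 * p.2 ^ 3)) q (ζ q) : ℝ × ℝ) = (0, 0) := by
      intro q hq
      have hq' : |q.2| < b2 ^ 2 / (8 * b3) := hq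
      have harg : (0:ℝ) ≤ b2 ^ 2 + 4 * b3 * q.2 := by
        have h1 : -(b2 ^ 2 / (8 * b3)) < q.2 := neg_lt_of_abs_lt hq'
        have h2 : b2 ^ 2 / (8 * b3) * (8 * b3) = b2 ^ 2 := by field_simp
        nlinarith
      set s := Real.sqrt (b2 ^ 2 + 4 * b3 * q.2) with hsdef
      have hs2 : s ^ 2 = b2 ^ 2 + 4 * b3 * q.2 := Real.sq_sqrt harg
      have key : b3 * ((-b2 + s) / (2 * b3)) ^ 2 + b2 * ((-b2 + s) / (2 * b3)) - q.2 = 0 := by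
        field_simp
        linear_combination hs2
      refine Prod.ext ?_ ?_
      · simp [hζ]
      · simp only [hζ]
        linear_combination (-((-b2 + s) / (2 * b3))) * key
    refine branch_lemma a1 a2 b1 b2 b3 _ U hUopen h0U ζ hζc hζ0 hroot ?_ ?_
    · rw [jac_eq, Matrix.trace_fin_two_of]
      have e : (((0:ℝ),(0:ℝ)).1 - a1 * (((0:ℝ), -b2 / b3).2) - 2 * a2 * (((0:ℝ), -b2/b3).1)) +
          ((((0:ℝ),(0:ℝ)).2) - 2 * b2 * (((0:ℝ), -b2/b3).2) - 3 * b3 * (((0:ℝ), -b2/b3).2) ^ 2)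
          = (a1 * b2 - b2 ^ 2) / b3 := by field_simp; ring
      rw [e]
      exact div_neg_of_neg_of_pos (by nlinarith) hb3
    · rw [jac_eq, Matrix.det_fin_two_of]
      have e : (((0:ℝ),(0:ℝ)).1 - a1 * (((0:ℝ), -b2 / b3).2) - 2 * a2 * (((0:ℝ), -b2/b3).1)) *
          ((((0:ℝ),(0:ℝ)).2) - 2 * b2 * (((0:ℝ), -b2/b3).2) - 3 * b3 * (((0:ℝ), -b2/b3).2) ^ 2)
          - (-(a1 * (((0:ℝ), -b2/b3).1))) * (-b1) = (-(a1 * b2 ^ 3)) / b3 ^ 2 := by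
        field_simp; ring
      rw [e]
      have hnb : (0:ℝ) < -b2 := neg_pos.2 hb2
      exact div_pos (by nlinarith [mul_pos ha1 (mul_pos (mul_pos hnb hnb) hnb)]) (by positivity)
  · -- Z2 = (a1*α/a2, -α)
    have ha2' : a2 ≠ 0 := ne_of_gt ha2
    set k : ℝ := b1 / a2 with hk
    have hidk : b3 * α ^ 2 - b2 * α = a1 * k := by rw [hk]; rw [hid]; ring
    set c : ℝ := 2 * b3 * α ^ 2 - b2 * α with hc
    have hcpos : 0 < c := by nlinarith [mul_pos hb3 (mul_pos hαpos hαpos), mul_pos hαpos hαpos]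
    have hc' : c ≠ 0 := ne_of_gt hcpos
    set P : (ℝ × ℝ) × ℝ → ℝ := fun z =>
      b3 * (z.2 * z.2 * z.2) + b2 * (z.2 * z.2) - (z.1.2 + a1 * k) * z.2
        + k * z.1.1 with hP
    set Φ : (ℝ × ℝ) × ℝ → (ℝ × ℝ) × ℝ := fun z => (z.1, P z) with hΦ
    set z0 : (ℝ × ℝ) × ℝ := (((0:ℝ), (0:ℝ)), -α) with hz0
    -- projections
    set fst2 : (ℝ × ℝ) × ℝ →L[ℝ] ℝ × ℝ := ContinuousLinearMap.fst ℝ (ℝ × ℝ) ℝ with hfst2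
    set π1 : (ℝ × ℝ) × ℝ →L[ℝ] ℝ := (ContinuousLinearMap.fst ℝ ℝ ℝ).comp fst2 with hπ1
    set π2 : (ℝ × ℝ) × ℝ →L[ℝ] ℝ := (ContinuousLinearMap.snd ℝ ℝ ℝ).comp fst2 with hπ2
    set πt : (ℝ × ℝ) × ℝ →L[ℝ] ℝ := ContinuousLinearMap.snd ℝ (ℝ × ℝ) ℝ with hπt
    set D : (ℝ × ℝ) × ℝ →L[ℝ] ℝ := k • π1 + α • π2 + c • πt with hD
    set L : (ℝ × ℝ) × ℝ →L[ℝ] (ℝ × ℝ) × ℝ := fst2.prod D with hL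
    set Linv : (ℝ × ℝ) × ℝ →L[ℝ] (ℝ × ℝ) × ℝ :=
      fst2.prod (c⁻¹ • (πt - k • π1 - α • π2)) with hLinv
    have hleft : Function.LeftInverse Linv L := by
      rintro ⟨⟨x, y⟩, t⟩
      simp only [hL, hLinv, hD, ContinuousLinearMap.prod_apply, ContinuousLinearMap.add_apply,
        ContinuousLinearMap.smul_apply, ContinuousLinearMap.sub_apply, ContinuousLinearMap.coe_comp',
        Function.comp_apply, ContinuousLinearMap.coe_fst', ContinuousLinearMap.coe_snd',
        smul_eq_mul, hπ1, hπ2, hπt, hfst2]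
      refine Prod.ext rfl ?_
      field_simp
      try ring
    have hright : Function.RightInverse Linv L := by
      rintro ⟨⟨x, y⟩, t⟩
      simp only [hL, hLinv, hD, ContinuousLinearMap.prod_apply, ContinuousLinearMap.add_apply,
        ContinuousLinearMap.smul_apply, ContinuousLinearMap.sub_apply, ContinuousLinearMap.coe_comp',
        Function.comp_apply, ContinuousLinearMap.coe_fst', ContinuousLinearMap.coe_snd',
        smul_eq_mul, hπ1, hπ2, hπt, hfst2]
      refine Prod.ext rfl ?_
      field_simp
      try ring
    set Leq : ((ℝ × ℝ) × ℝ) ≃L[ℝ] (ℝ × ℝ) × ℝ :=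
      ContinuousLinearEquiv.equivOfInverse L Linv hleft hright with hLeq
    -- strict derivative of P
    have hxt : HasStrictFDerivAt (fun z : (ℝ × ℝ) × ℝ => z.2) πt z0 := hasStrictFDerivAt_snd
    have hx1 : HasStrictFDerivAt (fun z : (ℝ × ℝ) × ℝ => z.1.1) π1 z0 :=
      hasStrictFDerivAt_fst.comp z0 hasStrictFDerivAt_fst
    have hx2 : HasStrictFDerivAt (fun z : (ℝ × ℝ) × ℝ => z.1.2) π2 z0 :=
      hasStrictFDerivAt_snd.comp z0 hasStrictFDerivAt_fst
    have hPd : HasStrictFDerivAt P D z0 := by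
      have h := ((((hxt.mul hxt).mul hxt).const_mul b3).add
          ((hxt.mul hxt).const_mul b2)).sub ((hx2.add_const (a1 * k)).mul hxt) |>.add
          (hx1.const_mul k)
      refine h.congr_fderiv ?_
      symm
      apply ContinuousLinearMap.ext
      rintro ⟨⟨x, y⟩, t⟩
      simp only [hD, ContinuousLinearMap.add_apply, ContinuousLinearMap.smul_apply,
        ContinuousLinearMap.sub_apply, ContinuousLinearMap.coe_comp', Function.comp_apply,
        ContinuousLinearMap.coe_fst', ContinuousLinearMap.coe_snd', smul_eq_mul,
        hπ1, hπ2, hπt, hfst2, hz0, Pi.mul_apply]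
      linear_combination (-t) * hidk
    have hΦd : HasStrictFDerivAt Φ (Leq : (ℝ × ℝ) × ℝ →L[ℝ] (ℝ × ℝ) × ℝ) z0 := by
      have h : HasStrictFDerivAt Φ L z0 := HasStrictFDerivAt.prodMk hasStrictFDerivAt_fst hPd
      exact h
    set ph := hΦd.toOpenPartialHomeomorph Φ with hph
    have hcoe : ⇑ph = Φ := hΦd.toOpenPartialHomeomorph_coe
    have hsrc : z0 ∈ ph.source := hΦd.mem_toOpenPartialHomeomorph_source
    have hΦz0 : Φ z0 = ((((0:ℝ),(0:ℝ)), (0:ℝ)) : (ℝ × ℝ) × ℝ) := by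
      simp only [hΦ, hP, hz0]
      refine Prod.ext rfl ?_
      simp only
      linear_combination (-α) * hidk
    have htgt : ((((0:ℝ),(0:ℝ)), (0:ℝ)) : (ℝ × ℝ) × ℝ) ∈ ph.target := by
      rw [← hΦz0]; exact hΦd.image_mem_toOpenPartialHomeomorph_target
    set U : Set (ℝ × ℝ) := {q | ((q, (0:ℝ)) : (ℝ × ℝ) × ℝ) ∈ ph.target} with hUdef
    have hUopen : IsOpen U := ph.open_target.preimage (continuous_id.prodMk continuous_const)
    have h0U : ((0:ℝ),(0:ℝ)) ∈ U := htgt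
    set T : ℝ × ℝ → ℝ := fun q => (ph.symm (q, 0)).2 with hT
    set ζ : ℝ × ℝ → ℝ × ℝ := fun q => ((q.1 - a1 * T q) / a2, T q) with hζ
    have hsymc : ContinuousOn (fun q : ℝ × ℝ => ph.symm (q, 0)) U :=
      ph.continuousOn_symm.comp ((continuous_id.prodMk continuous_const).continuousOn)
        (fun q hq => hq)
    have hTc : ContinuousOn T U := continuous_snd.comp_continuousOn hsymc
    have hζc : ContinuousOn ζ U :=
      ((continuous_fst.continuousOn.sub (continuousOn_const.mul hTc)).div_const a2).prodMk hTc
    have hsym0 : ph.symm ((((0:ℝ),(0:ℝ)), (0:ℝ)) : (ℝ × ℝ) × ℝ) = z0 := by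
      rw [← hΦz0, ← hcoe]; exact ph.left_inv hsrc
    have hζ0 : ζ (0, 0) = (a1 * α / a2, -α) := by
      have hT0 : T (0, 0) = -α := by rw [hT]; simp only; rw [hsym0]
      rw [hζ, hT]
      simp only
      rw [show ((((0:ℝ),(0:ℝ)).1, ((0:ℝ),(0:ℝ)).2), (0:ℝ)) = ((((0:ℝ),(0:ℝ)), (0:ℝ)) : (ℝ × ℝ) × ℝ) from rfl]
      rw [hsym0]
      refine Prod.ext ?_ rfl
      simp only [hz0]
      ring
    have hroot : ∀ q ∈ U, ((fun q (p : ℝ × ℝ) => (q.1 * p.1 - a1 * p.2 * p.1 - a2 * p.1 ^ 2,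
        q.2 * p.2 - b1 * p.1 - b2 * p.2 ^ 2 - b3 * p.2 ^ 3)) q (ζ q) : ℝ × ℝ) = (0, 0) := by
      intro q hq
      have hr : Φ (ph.symm (q, 0)) = (q, 0) := by rw [← hcoe]; exact ph.right_inv hq
      rw [hΦ] at hr
      simp only [hP, Prod.mk.injEq] at hr
      obtain ⟨h1, h2⟩ := hr
      rw [h1] at h2
      rw [hk] at h2
      refine Prod.ext ?_ ?_
      · simp only [hζ]
        field_simp
        ring
      · simp only [hζ]
        linear_combination (-1 : ℝ) * h2
    refine branch_lemma a1 a2 b1 b2 b3 _ U hUopen h0U ζ hζc hζ0 hroot ?_ ?_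
    · rw [jac_eq, Matrix.trace_fin_two_of]
      have e : ((((0:ℝ),(0:ℝ)).1 - a1 * ((a1 * α / a2, -α) : ℝ × ℝ).2 - 2 * a2 * ((a1 * α / a2, -α) : ℝ × ℝ).1) +
        ((((0:ℝ),(0:ℝ)).2) - 2 * b2 * ((a1 * α / a2, -α) : ℝ × ℝ).2 - 3 * b3 * ((a1 * α / a2, -α) : ℝ × ℝ).2 ^ 2))
        = -(a1 * α) + (2 * b2 * α - 3 * b3 * α ^ 2) := by
        simp only
        field_simp
        ring
      rw [e]
      nlinarith [mul_pos ha1 hαpos, mul_pos hb3 (mul_pos hαpos hαpos), mul_pos (neg_pos.2 hb2) hαpos]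
    · rw [jac_eq, Matrix.det_fin_two_of]
      have e : ((((0:ℝ),(0:ℝ)).1 - a1 * ((a1 * α / a2, -α) : ℝ × ℝ).2 - 2 * a2 * ((a1 * α / a2, -α) : ℝ × ℝ).1) *
        ((((0:ℝ),(0:ℝ)).2) - 2 * b2 * ((a1 * α / a2, -α) : ℝ × ℝ).2 - 3 * b3 * ((a1 * α / a2, -α) : ℝ × ℝ).2 ^ 2)
        - (-(a1 * ((a1 * α / a2, -α) : ℝ × ℝ).1)) * (-b1)) = a1 * α ^ 2 * (2 * b3 * α - b2) := by
        simp only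
        field_simp
        linear_combination (a1 * α) * hida
      rw [e]
      have hpos : 0 < 2 * b3 * α - b2 := by nlinarith [mul_pos hb3 hαpos]
      positivity
end
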